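/- With the setup of the previous statement (A continuous on [0,1], A' increasing on [0,1], A(1) = −y_E(0) < 0), let δ ∈ [0, y_E(0)) and suppose z_δ ∈ (0,1) satisfies A(z_δ) = −δ/z_δ. Then A'(z_δ) < δ/z_δ². -/

import Mathlib

/-- If `A` is differentiable with increasing derivative `A'` on
`[0,1]`, `A(1) = −y_E(0) < 0`, `δ ∈ [0, y_E(0))` and `z_δ ∈ (0,1)` satisfies
`A(z_δ) = −δ/z_δ`, then `A'(z_δ) < δ/z_δ²` (the transversality condition). -/
theorem stmt_18 (yE0 : ℝ) (hy : 0 < yE0)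
    (A A' : ℝ → ℝ) (hcont : ContinuousOn A (Set.Icc 0 1))
    (hderiv : ∀ z ∈ Set.Icc (0 : ℝ) 1, HasDerivAt A (A' z) z)
    (hA'mono : MonotoneOn A' (Set.Icc 0 1))
    (hA1 : A 1 = -yE0)
    (δ : ℝ) (hδ : δ ∈ Set.Ico 0 yE0)
    (zδ : ℝ) (hzδ : zδ ∈ Set.Ioo (0 : ℝ) 1) (hAz : A zδ = -δ / zδ) :
    A' zδ < δ / zδ ^ 2 := by
  obtain ⟨hz0, hz1⟩ := hzδ
  obtain ⟨hδ0, hδy⟩ := hδ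
  by_contra hcon
  push_neg at hcon
  -- f z = A z + δ / z
  set f : ℝ → ℝ := fun z => A z + δ / z with hf
  -- derivative of f at points of [zδ, 1]
  have hfd : ∀ x ∈ Set.Icc zδ 1, HasDerivAt f (A' x - δ / x ^ 2) x := by
    intro x hx
    have hx0 : 0 < x := lt_of_lt_of_le hz0 hx.1
    have hxI : x ∈ Set.Icc (0 : ℝ) 1 := ⟨hx0.le, hx.2⟩
    have hg : HasDerivAt (fun z => δ / z) (-(δ / x ^ 2)) x := by
      have := (hasDerivAt_inv hx0.ne').const_mul δ
      simpa [div_eq_mul_inv, mul_comm] using this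
    have := (hderiv x hxI).add hg
    rw [sub_eq_add_neg]; exact this
  -- f is monotone on [zδ, 1]
  have hmono : MonotoneOn f (Set.Icc zδ 1) := by
    apply monotoneOn_of_deriv_nonneg (convex_Icc zδ 1)
    · intro x hx
      have hx0 : 0 < x := lt_of_lt_of_le hz0 hx.1
      exact ((hcont.continuousWithinAt ⟨hx0.le, hx.2⟩).mono
        (fun y hy => ⟨le_trans hz0.le hy.1, hy.2⟩ : Set.Icc zδ 1 ⊆ Set.Icc 0 1)).add
        (ContinuousWithinAt.div continuousWithinAt_const continuousWithinAt_id hx0.ne')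
    · intro x hx
      rw [interior_Icc] at hx
      exact ((hfd x ⟨hx.1.le, hx.2.le⟩).differentiableAt.differentiableWithinAt)
    · intro x hx
      rw [interior_Icc] at hx
      have hxd := (hfd x ⟨hx.1.le, hx.2.le⟩).deriv
      rw [hxd]
      have h1 : A' zδ ≤ A' x :=
        hA'mono ⟨hz0.le, hz1.le⟩ ⟨le_trans hz0.le hx.1.le, hx.2.le⟩ hx.1.le
      have h2 : δ / x ^ 2 ≤ δ / zδ ^ 2 := by
        apply div_le_div_of_nonneg_left hδ0 (by positivity)
        exact pow_le_pow_left₀ hz0.le hx.1.le 2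
      linarith
  have hle : f zδ ≤ f 1 := hmono ⟨le_refl _, hz1.le⟩ ⟨hz1.le, le_refl _⟩ hz1.le
  have hfz : f zδ = 0 := by
    simp only [hf, hAz]
    field_simp
    ring
  have hf1 : f 1 = -yE0 + δ := by simp [hf, hA1]
  rw [hfz, hf1] at hle
  linarith
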